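/- Fix integers n ≥ 2 and k ≥ 3, and set γ_k := 1/2 − 1/k. For A₁ > 0 let Z₁(u) := A₁ u^{−2}(1 − u²)^{1+2γ_k} on (0,1). Then there exists a constant C, depending only on n and k, such that |Q_u[Z₁](u)| ≤ C A₁² u^{−6}(1 − u²)^{4γ_k} for all u ∈ (0,1). -/

import Mathlib

open Topology Filter Asymptotics Set

set_option maxHeartbeats 1000000

/-- `γ_k = 1/2 - 1/k`. -/
noncomputable def gam (k : ℕ) : ℝ := 1/2 - 1/(k:ℝ)

/-- The quadratic operator `Q_u[Z] = Z Z'' - (1/2)(Z')² - Z Z'/u - 2(n-1)Z²/u²`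
applied to a function of `u` alone. -/
noncomputable def Qop (n : ℕ) (Z : ℝ → ℝ) (u : ℝ) : ℝ :=
  Z u * deriv (deriv Z) u - (1/2) * (deriv Z u)^2
    - Z u * deriv Z u / u - 2 * ((n:ℝ) - 1) * (Z u)^2 / u^2

/-- the estimate `|Q_u[Z₁]| ≤ C A₁² u⁻⁶ (1-u²)^{4γ_k}` on `(0,1)`,
with `C` depending only on `n` and `k`. -/
theorem stmt1 (n k : ℕ) (hn : 2 ≤ n) (hk : 3 ≤ k) :
    ∃ C : ℝ, ∀ A₁ : ℝ, 0 < A₁ → ∀ u ∈ Set.Ioo (0:ℝ) 1,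
      |Qop n (fun x => A₁ * x ^ (-2:ℝ) * (1 - x^2) ^ (1 + 2 * gam k)) u|
        ≤ C * A₁^2 * u ^ (-6:ℝ) * (1 - u^2) ^ (4 * gam k) := by
  set p : ℝ := 1 + 2 * gam k with hp
  refine ⟨|8 - 2*(n:ℝ)| + |4*p| + |2*p^2 - 4*p|, ?_⟩
  intro A hA u hu
  obtain ⟨hu0, hu1⟩ := hu
  have hwu : (0:ℝ) < 1 - u^2 := by nlinarith
  -- first derivative
  have hder : ∀ x ∈ Set.Ioo (0:ℝ) 1,
      HasDerivAt (fun y : ℝ => A * y ^ (-2:ℝ) * (1-y^2)^p)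
        (A * (-2 * x^(-3:ℝ) * (1-x^2)^p - 2*p*x^(-1:ℝ)*(1-x^2)^(p-1))) x := by
    intro x hx
    obtain ⟨hx0, hx1⟩ := hx
    have hwx : (0:ℝ) < 1 - x^2 := by nlinarith
    have h1 : HasDerivAt (fun y:ℝ => y ^ (-2:ℝ)) (-2 * x^(-2-1:ℝ)) x :=
      Real.hasDerivAt_rpow_const (Or.inl hx0.ne')
    have h2 : HasDerivAt (fun y:ℝ => 1 - y^2) (-(2*x)) x := by
      simpa using (hasDerivAt_pow 2 x).const_sub 1
    have h3 : HasDerivAt (fun y:ℝ => (1-y^2)^p) (-(2*x) * p * (1-x^2)^(p-1)) x :=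
      h2.rpow_const (Or.inl hwx.ne')
    have h := (h1.const_mul A).mul h3
    refine h.congr_deriv ?_
    symm
    have r1 : x^(-1:ℝ) = x⁻¹ := Real.rpow_neg_one x
    have r3 : x^(-2-1:ℝ) = x⁻¹^3 := by
      rw [show ((-2-1:ℝ)) = (-((3:ℕ):ℝ)) by norm_num, Real.rpow_neg hx0.le,
        Real.rpow_natCast, ← inv_pow]
    have r3' : x^(-3:ℝ) = x⁻¹^3 := by
      rw [show ((-3:ℝ)) = (-((3:ℕ):ℝ)) by norm_num, Real.rpow_neg hx0.le,
        Real.rpow_natCast, ← inv_pow]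
    have r2 : x^(-2:ℝ) = x⁻¹^2 := by
      rw [show ((-2:ℝ)) = (-((2:ℕ):ℝ)) by norm_num, Real.rpow_neg hx0.le,
        Real.rpow_natCast, ← inv_pow]
    rw [r1, r3, r3', r2]
    field_simp
    ring
  -- second derivative
  have hder2 : ∀ x ∈ Set.Ioo (0:ℝ) 1,
      HasDerivAt (fun y : ℝ => A * (-2 * y^(-3:ℝ) * (1-y^2)^p - 2*p*y^(-1:ℝ)*(1-y^2)^(p-1)))
        (A * (6*x^(-4:ℝ)*(1-x^2)^p + 6*p*x^(-2:ℝ)*(1-x^2)^(p-1)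
          + 4*p*(p-1)*(1-x^2)^(p-2))) x := by
    intro x hx
    obtain ⟨hx0, hx1⟩ := hx
    have hwx : (0:ℝ) < 1 - x^2 := by nlinarith
    have h1 : HasDerivAt (fun y:ℝ => y ^ (-3:ℝ)) (-3 * x^(-3-1:ℝ)) x :=
      Real.hasDerivAt_rpow_const (Or.inl hx0.ne')
    have h1' : HasDerivAt (fun y:ℝ => y ^ (-1:ℝ)) (-1 * x^(-1-1:ℝ)) x :=
      Real.hasDerivAt_rpow_const (Or.inl hx0.ne')
    have h2 : HasDerivAt (fun y:ℝ => 1 - y^2) (-(2*x)) x := by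
      simpa using (hasDerivAt_pow 2 x).const_sub 1
    have h3 : HasDerivAt (fun y:ℝ => (1-y^2)^p) (-(2*x) * p * (1-x^2)^(p-1)) x :=
      h2.rpow_const (Or.inl hwx.ne')
    have h3' : HasDerivAt (fun y:ℝ => (1-y^2)^(p-1)) (-(2*x) * (p-1) * (1-x^2)^(p-1-1)) x :=
      h2.rpow_const (Or.inl hwx.ne')
    have h := (((h1.const_mul (-2)).mul h3).sub ((h1'.const_mul (2*p)).mul h3')).const_mul A
    refine h.congr_deriv ?_
    symm
    have r1 : x^(-1:ℝ) = x⁻¹ := Real.rpow_neg_one x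
    have r2 : x^(-2:ℝ) = x⁻¹^2 := by
      rw [show ((-2:ℝ)) = (-((2:ℕ):ℝ)) by norm_num, Real.rpow_neg hx0.le,
        Real.rpow_natCast, ← inv_pow]
    have r2' : x^(-1-1:ℝ) = x⁻¹^2 := by
      rw [show ((-1-1:ℝ)) = (-((2:ℕ):ℝ)) by norm_num, Real.rpow_neg hx0.le,
        Real.rpow_natCast, ← inv_pow]
    have r3 : x^(-3:ℝ) = x⁻¹^3 := by
      rw [show ((-3:ℝ)) = (-((3:ℕ):ℝ)) by norm_num, Real.rpow_neg hx0.le,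
        Real.rpow_natCast, ← inv_pow]
    have r4 : x^(-4:ℝ) = x⁻¹^4 := by
      rw [show ((-4:ℝ)) = (-((4:ℕ):ℝ)) by norm_num, Real.rpow_neg hx0.le,
        Real.rpow_natCast, ← inv_pow]
    have r4' : x^(-3-1:ℝ) = x⁻¹^4 := by
      rw [show ((-3-1:ℝ)) = (-((4:ℕ):ℝ)) by norm_num, Real.rpow_neg hx0.le,
        Real.rpow_natCast, ← inv_pow]
    have w1 : (1-x^2)^(p-1) = (1-x^2)^(p-2) * (1-x^2) := by
      rw [show (p-1:ℝ) = (p-2)+1 by ring, Real.rpow_add_one hwx.ne']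
    have w0 : (1-x^2)^p = (1-x^2)^(p-2) * (1-x^2)^2 := by
      rw [← Real.rpow_natCast (1-x^2) 2, ← Real.rpow_add hwx]
      norm_num
    have w1' : (1-x^2)^(p-1-1:ℝ) = (1-x^2)^(p-2) := by
      rw [show (p-1-1:ℝ) = p-2 by ring]
    rw [r1, r2, r2', r3, r4, r4', w1, w0, w1']
    field_simp
    ring
  -- identify the derivatives
  have hmem : Set.Ioo (0:ℝ) 1 ∈ 𝓝 u := Ioo_mem_nhds hu0 hu1
  have hdZ : deriv (fun x => A * x ^ (-2:ℝ) * (1 - x^2) ^ p) u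
      = A * (-2 * u^(-3:ℝ) * (1-u^2)^p - 2*p*u^(-1:ℝ)*(1-u^2)^(p-1)) :=
    (hder u ⟨hu0, hu1⟩).deriv
  have hEq : deriv (fun x => A * x ^ (-2:ℝ) * (1 - x^2) ^ p)
      =ᶠ[𝓝 u] fun x => A * (-2 * x^(-3:ℝ) * (1-x^2)^p - 2*p*x^(-1:ℝ)*(1-x^2)^(p-1)) := by
    filter_upwards [hmem] with x hx using (hder x hx).deriv
  have hdd : deriv (deriv (fun x => A * x ^ (-2:ℝ) * (1 - x^2) ^ p)) u
      = A * (6*u^(-4:ℝ)*(1-u^2)^p + 6*p*u^(-2:ℝ)*(1-u^2)^(p-1)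
          + 4*p*(p-1)*(1-u^2)^(p-2)) := by
    rw [hEq.deriv_eq]
    exact (hder2 u ⟨hu0, hu1⟩).deriv
  -- the key algebraic identity
  have hg : (4 * gam k : ℝ) = 2*p - 2 := by rw [hp]; ring
  have key : Qop n (fun x => A * x ^ (-2:ℝ) * (1 - x^2) ^ p) u
      = A^2 * u^(-6:ℝ) * (1-u^2)^(4 * gam k) *
        ((8 - 2*(n:ℝ)) * (1-u^2)^2 + 4*p*u^2*(1-u^2) + (2*p^2-4*p)*u^4) := by
    rw [Qop, hdZ, hdd, hg]
    have r1 : u^(-1:ℝ) = u⁻¹ := Real.rpow_neg_one u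
    have r2 : u^(-2:ℝ) = u⁻¹^2 := by
      rw [show ((-2:ℝ)) = (-((2:ℕ):ℝ)) by norm_num, Real.rpow_neg hu0.le,
        Real.rpow_natCast, ← inv_pow]
    have r3 : u^(-3:ℝ) = u⁻¹^3 := by
      rw [show ((-3:ℝ)) = (-((3:ℕ):ℝ)) by norm_num, Real.rpow_neg hu0.le,
        Real.rpow_natCast, ← inv_pow]
    have r4 : u^(-4:ℝ) = u⁻¹^4 := by
      rw [show ((-4:ℝ)) = (-((4:ℕ):ℝ)) by norm_num, Real.rpow_neg hu0.le,
        Real.rpow_natCast, ← inv_pow]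
    have r6 : u^(-6:ℝ) = u⁻¹^6 := by
      rw [show ((-6:ℝ)) = (-((6:ℕ):ℝ)) by norm_num, Real.rpow_neg hu0.le,
        Real.rpow_natCast, ← inv_pow]
    have w1 : (1-u^2)^(p-1) = (1-u^2)^(p-2) * (1-u^2) := by
      rw [show (p-1:ℝ) = (p-2)+1 by ring, Real.rpow_add_one hwu.ne']
    have w0 : (1-u^2)^p = (1-u^2)^(p-2) * (1-u^2)^2 := by
      rw [← Real.rpow_natCast (1-u^2) 2, ← Real.rpow_add hwu]; norm_num
    have w2 : (1-u^2)^(2*p-2:ℝ) = ((1-u^2)^(p-2))^2 * (1-u^2)^2 := by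
      rw [← Real.rpow_natCast ((1-u^2)^(p-2:ℝ)) 2, ← Real.rpow_natCast (1-u^2) 2,
        ← Real.rpow_mul hwu.le, ← Real.rpow_add hwu]
      norm_num; ring_nf
    rw [r1, r2, r3, r4, r6, w1, w0, w2]
    have hu : u ≠ 0 := hu0.ne'
    field_simp
    ring
  -- the bound
  rw [key]
  have hB : |(8 - 2*(n:ℝ)) * (1-u^2)^2 + 4*p*u^2*(1-u^2) + (2*p^2-4*p)*u^4|
      ≤ |8 - 2*(n:ℝ)| + |4*p| + |2*p^2 - 4*p| := by
    have e1 : |(8 - 2*(n:ℝ)) * (1-u^2)^2| ≤ |8 - 2*(n:ℝ)| := by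
      rw [abs_mul]
      refine mul_le_of_le_one_right (abs_nonneg _) ?_
      rw [abs_of_nonneg (by positivity)]
      nlinarith
    have e2 : |4*p*u^2*(1-u^2)| ≤ |4*p| := by
      rw [show (4*p*u^2*(1-u^2)) = (4*p)*(u^2*(1-u^2)) by ring, abs_mul]
      refine mul_le_of_le_one_right (abs_nonneg _) ?_
      rw [abs_of_nonneg (by positivity)]
      nlinarith
    have e3 : |(2*p^2-4*p)*u^4| ≤ |2*p^2 - 4*p| := by
      rw [abs_mul]
      refine mul_le_of_le_one_right (abs_nonneg _) ?_
      rw [abs_of_nonneg (by positivity)]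
      nlinarith
    calc |(8 - 2*(n:ℝ)) * (1-u^2)^2 + 4*p*u^2*(1-u^2) + (2*p^2-4*p)*u^4|
        ≤ |(8 - 2*(n:ℝ)) * (1-u^2)^2| + |4*p*u^2*(1-u^2)| + |(2*p^2-4*p)*u^4| :=
          abs_add_three _ _ _
      _ ≤ |8 - 2*(n:ℝ)| + |4*p| + |2*p^2 - 4*p| := by linarith
  have h6 : (0:ℝ) < u^(-6:ℝ) := Real.rpow_pos_of_pos hu0 _
  have hwp : (0:ℝ) < (1-u^2)^(4*gam k) := Real.rpow_pos_of_pos hwu _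
  calc |A^2 * u^(-6:ℝ) * (1-u^2)^(4 * gam k) *
        ((8 - 2*(n:ℝ)) * (1-u^2)^2 + 4*p*u^2*(1-u^2) + (2*p^2-4*p)*u^4)|
      = A^2 * u^(-6:ℝ) * (1-u^2)^(4 * gam k) *
        |(8 - 2*(n:ℝ)) * (1-u^2)^2 + 4*p*u^2*(1-u^2) + (2*p^2-4*p)*u^4| := by
        rw [abs_mul, abs_of_nonneg (by positivity : (0:ℝ) ≤ A^2 * u^(-6:ℝ) * (1-u^2)^(4*gam k))]
    _ ≤ A^2 * u^(-6:ℝ) * (1-u^2)^(4 * gam k) * (|8 - 2*(n:ℝ)| + |4*p| + |2*p^2 - 4*p|) := by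
        refine mul_le_mul_of_nonneg_left hB (by positivity)
    _ = (|8 - 2*(n:ℝ)| + |4*p| + |2*p^2 - 4*p|) * A^2 * u^(-6:ℝ) * (1-u^2)^(4 * gam k) := by
        ring
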